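/- Under the assumptions of Theorem 4.1 (R twice differentiable, bounded below, L-smooth; F(θ) = ‖∇R(θ)‖² is L₂-smooth; unbiased gradient estimates with variance bound m₁ + m₂‖∇R(θ_k)‖²; step sizes with ∑α_k = ∞ and ∑α_k² < ∞; update θ_{k+1} = θ_k - α_k ḡ_k), one has E[F(θ_{k+1})] - E[F(θ_k)] ≤ 2α_k L E[‖∇R(θ_k)‖²] + (α_k² L₂/2)(m₁/M + ((m₂+M)/M) E[‖∇R(θ_k)‖²]). -/

import Mathlib

open MeasureTheory

set_option maxHeartbeats 800000 in
/-- Key inequality in the proof of Theorem 4.1: one-step expected change of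
`F(θ) = ‖∇R(θ)‖²` along the averaged noisy SGD update. -/
theorem sq_grad_norm_descent {d M : ℕ} (hM : 0 < M) {Ω : Type*}
    [MeasureSpace Ω] [IsProbabilityMeasure (volume : Measure Ω)]
    (R : EuclideanSpace ℝ (Fin d) → ℝ) (L L₂ Rstar : ℝ)
    (hL : 0 < L) (hL₂ : 0 < L₂) (hR : ContDiff ℝ 2 R)
    (hbdd : ∀ θ, Rstar ≤ R θ)
    (hLip : ∀ θ θ' : EuclideanSpace ℝ (Fin d),
      ‖gradient R θ - gradient R θ'‖ ≤ L * ‖θ - θ'‖)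
    (hLip₂ : ∀ θ θ' : EuclideanSpace ℝ (Fin d),
      ‖gradient (fun x => ‖gradient R x‖ ^ 2) θ
        - gradient (fun x => ‖gradient R x‖ ^ 2) θ'‖ ≤ L₂ * ‖θ - θ'‖)
    (θk : EuclideanSpace ℝ (Fin d)) (αk m₁ m₂ : ℝ)
    (hα : 0 < αk) (hm₁ : 0 ≤ m₁) (hm₂ : 0 ≤ m₂)
    (gbar : Ω → EuclideanSpace ℝ (Fin d))
    (hint : Integrable gbar) (hint2 : Integrable (fun ω => ‖gbar ω‖ ^ 2))
    (hintF : Integrable (fun ω => ‖gradient R (θk - αk • gbar ω)‖ ^ 2))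
    (hmean : ∫ ω, gbar ω = gradient R θk)
    (hsecond : ∫ ω, ‖gbar ω‖ ^ 2
      ≤ m₁ / M + ((m₂ + M) / M) * ‖gradient R θk‖ ^ 2) :
    (∫ ω, ‖gradient R (θk - αk • gbar ω)‖ ^ 2) - ‖gradient R θk‖ ^ 2
      ≤ 2 * αk * L * ‖gradient R θk‖ ^ 2
        + αk ^ 2 * L₂ / 2
          * (m₁ / M + ((m₂ + M) / M) * ‖gradient R θk‖ ^ 2) := by
  classical
  set Fn : EuclideanSpace ℝ (Fin d) → ℝ := fun x => ‖gradient R x‖ ^ 2 with hFndef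
  -- gradient R is C¹
  have hG : ContDiff ℝ 1 (gradient R) := by
    have h1 : ContDiff ℝ 1 (fderiv ℝ R) := hR.fderiv_right (by norm_num)
    exact (InnerProductSpace.toDual ℝ
      (EuclideanSpace ℝ (Fin d))).symm.contDiff.comp h1
  have hF : ContDiff ℝ 1 Fn := ContDiff.norm_sq ℝ hG
  have hFdiff : Differentiable ℝ Fn := hF.differentiable one_ne_zero
  -- fderiv Fn is L₂-Lipschitz
  have hfd_eq : ∀ a, fderiv ℝ Fn a
      = InnerProductSpace.toDual ℝ (EuclideanSpace ℝ (Fin d)) (gradient Fn a) := by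
    intro a
    simp [gradient]
  have hLipF : ∀ a b : EuclideanSpace ℝ (Fin d),
      ‖fderiv ℝ Fn a - fderiv ℝ Fn b‖ ≤ L₂ * ‖a - b‖ := by
    intro a b
    rw [hfd_eq a, hfd_eq b, ← map_sub, LinearIsometryEquiv.norm_map]
    exact hLip₂ a b
  -- descent lemma
  have descent : ∀ v : EuclideanSpace ℝ (Fin d),
      Fn (θk + v) ≤ Fn θk + fderiv ℝ Fn θk v + L₂ / 2 * ‖v‖ ^ 2 := by
    intro v
    set φ' : ℝ → ℝ := fun t => fderiv ℝ Fn (θk + t • v) v with hφ'def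
    have hder : ∀ t : ℝ, HasDerivAt (fun s : ℝ => Fn (θk + s • v)) (φ' t) t := by
      intro t
      have h1 : HasDerivAt (fun s : ℝ => θk + s • v) v t := by
        simpa using ((hasDerivAt_id t).smul_const v).const_add θk
      exact (hFdiff (θk + t • v)).hasFDerivAt.comp_hasDerivAt t h1
    have hcont : Continuous φ' := by
      have h2 : Continuous fun t : ℝ => fderiv ℝ Fn (θk + t • v) :=
        (hF.continuous_fderiv one_ne_zero).comp (by continuity)
      exact h2.clm_apply continuous_const
    have hii : IntervalIntegrable φ' volume 0 1 := hcont.intervalIntegrable _ _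
    have heq : Fn (θk + v) - Fn θk = ∫ t in (0:ℝ)..1, φ' t := by
      rw [_root_.intervalIntegral.integral_eq_sub_of_hasDerivAt (fun t _ => hder t) hii]
      norm_num
    have hii2 : IntervalIntegrable
        (fun t => fderiv ℝ Fn θk v + L₂ * ‖v‖ ^ 2 * t) volume 0 1 :=
      (continuous_const.add (continuous_const.mul continuous_id)).intervalIntegrable _ _
    have hb : ∫ t in (0:ℝ)..1, φ' t
        ≤ ∫ t in (0:ℝ)..1, (fderiv ℝ Fn θk v + L₂ * ‖v‖ ^ 2 * t) := by
      apply _root_.intervalIntegral.integral_mono_on (by norm_num) hii hii2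
      intro t ht
      obtain ⟨ht0, ht1⟩ := ht
      have h1 : φ' t - fderiv ℝ Fn θk v ≤ L₂ * ‖v‖ ^ 2 * t := by
        have e1 : φ' t - fderiv ℝ Fn θk v
            = (fderiv ℝ Fn (θk + t • v) - fderiv ℝ Fn θk) v := by
          simp [hφ'def]
        have e2 : (fderiv ℝ Fn (θk + t • v) - fderiv ℝ Fn θk) v
            ≤ ‖fderiv ℝ Fn (θk + t • v) - fderiv ℝ Fn θk‖ * ‖v‖ := by
          calc (fderiv ℝ Fn (θk + t • v) - fderiv ℝ Fn θk) v
              ≤ ‖(fderiv ℝ Fn (θk + t • v) - fderiv ℝ Fn θk) v‖ := le_abs_self _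
            _ ≤ ‖fderiv ℝ Fn (θk + t • v) - fderiv ℝ Fn θk‖ * ‖v‖ :=
                ContinuousLinearMap.le_opNorm _ _
        have e3 : ‖fderiv ℝ Fn (θk + t • v) - fderiv ℝ Fn θk‖ ≤ L₂ * (t * ‖v‖) := by
          have := hLipF (θk + t • v) θk
          simpa [norm_smul, abs_of_nonneg ht0] using this
        have e4 : ‖fderiv ℝ Fn (θk + t • v) - fderiv ℝ Fn θk‖ * ‖v‖
            ≤ L₂ * (t * ‖v‖) * ‖v‖ :=
          mul_le_mul_of_nonneg_right e3 (norm_nonneg _)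
        rw [e1]
        calc (fderiv ℝ Fn (θk + t • v) - fderiv ℝ Fn θk) v
            ≤ L₂ * (t * ‖v‖) * ‖v‖ := e2.trans e4
          _ = L₂ * ‖v‖ ^ 2 * t := by ring
      linarith
    have hval : ∫ t in (0:ℝ)..1, (fderiv ℝ Fn θk v + L₂ * ‖v‖ ^ 2 * t)
        = fderiv ℝ Fn θk v + L₂ / 2 * ‖v‖ ^ 2 := by
      have hii3 : IntervalIntegrable (fun t : ℝ => L₂ * ‖v‖ ^ 2 * t) volume 0 1 := by
        apply Continuous.intervalIntegrable; fun_prop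
      open intervalIntegral in
      rw [integral_add intervalIntegrable_const hii3,
        intervalIntegral.integral_const_mul, integral_id]
      norm_num
      ring
    have := heq ▸ (hb.trans_eq hval)
    linarith [heq, hb.trans_eq hval]
  -- bound on ‖fderiv Fn θk‖
  have hGlip : LipschitzWith L.toNNReal (gradient R) := by
    apply LipschitzWith.of_dist_le_mul
    intro a b
    simpa [dist_eq_norm, Real.coe_toNNReal _ hL.le] using hLip a b
  have hDle : ‖fderiv ℝ (gradient R) θk‖ ≤ L := by
    have h := norm_fderiv_le_of_lipschitz (f := gradient R) (x₀ := θk) ℝ hGlip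
    rwa [Real.coe_toNNReal _ hL.le] at h
  have hchain : HasFDerivAt Fn
      (2 • (innerSL ℝ (gradient R θk)).comp (fderiv ℝ (gradient R) θk)) θk :=
    HasFDerivAt.norm_sq ((hG.differentiable one_ne_zero θk).hasFDerivAt)
  have hfb : ‖fderiv ℝ Fn θk‖ ≤ 2 * L * ‖gradient R θk‖ := by
    rw [hchain.fderiv]
    have h1 : ‖(innerSL ℝ (gradient R θk)).comp (fderiv ℝ (gradient R) θk)‖
        ≤ ‖gradient R θk‖ * L := by
      calc ‖(innerSL ℝ (gradient R θk)).comp (fderiv ℝ (gradient R) θk)‖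
          ≤ ‖innerSL ℝ (gradient R θk)‖ * ‖fderiv ℝ (gradient R) θk‖ :=
            ContinuousLinearMap.opNorm_comp_le _ _
        _ ≤ ‖gradient R θk‖ * L := by
            rw [innerSL_apply_norm]
            exact mul_le_mul_of_nonneg_left hDle (norm_nonneg _)
    calc ‖(2:ℕ) • (innerSL ℝ (gradient R θk)).comp (fderiv ℝ (gradient R) θk)‖
        = ‖(innerSL ℝ (gradient R θk)).comp (fderiv ℝ (gradient R) θk)
          + (innerSL ℝ (gradient R θk)).comp (fderiv ℝ (gradient R) θk)‖ := by
          rw [two_smul]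
      _ ≤ ‖(innerSL ℝ (gradient R θk)).comp (fderiv ℝ (gradient R) θk)‖
          + ‖(innerSL ℝ (gradient R θk)).comp (fderiv ℝ (gradient R) θk)‖ :=
          norm_add_le _ _
      _ ≤ (‖gradient R θk‖ * L) + (‖gradient R θk‖ * L) := add_le_add h1 h1
      _ = 2 * L * ‖gradient R θk‖ := by ring
  -- integration
  have hint3 : Integrable (fun ω => fderiv ℝ Fn θk (gbar ω)) :=
    (fderiv ℝ Fn θk).integrable_comp hint
  have key : ∀ ω, Fn (θk - αk • gbar ω)
      ≤ Fn θk - αk * fderiv ℝ Fn θk (gbar ω) + L₂ / 2 * (αk ^ 2 * ‖gbar ω‖ ^ 2) := by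
    intro ω
    have h := descent (-(αk • gbar ω))
    have e1 : θk + -(αk • gbar ω) = θk - αk • gbar ω := by abel
    have e2 : fderiv ℝ Fn θk (-(αk • gbar ω)) = -(αk * fderiv ℝ Fn θk (gbar ω)) := by
      rw [map_neg, (fderiv ℝ Fn θk).map_smul]; simp
    have e3 : ‖-(αk • gbar ω)‖ ^ 2 = αk ^ 2 * ‖gbar ω‖ ^ 2 := by
      rw [norm_neg, norm_smul, mul_pow, Real.norm_eq_abs, sq_abs]
    rw [e1, e2, e3] at h
    linarith
  have hrhs : Integrable (fun ω =>
      Fn θk - αk * fderiv ℝ Fn θk (gbar ω) + L₂ / 2 * (αk ^ 2 * ‖gbar ω‖ ^ 2)) := by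
    apply Integrable.add
    · exact (integrable_const _).sub (hint3.const_mul αk)
    · exact (hint2.const_mul (αk ^ 2)).const_mul (L₂ / 2)
  have hmono : ∫ ω, Fn (θk - αk • gbar ω)
      ≤ ∫ ω, (Fn θk - αk * fderiv ℝ Fn θk (gbar ω)
          + L₂ / 2 * (αk ^ 2 * ‖gbar ω‖ ^ 2)) :=
    integral_mono hintF hrhs key
  have hsplit : ∫ ω, (Fn θk - αk * fderiv ℝ Fn θk (gbar ω)
        + L₂ / 2 * (αk ^ 2 * ‖gbar ω‖ ^ 2))
      = Fn θk - αk * fderiv ℝ Fn θk (gradient R θk)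
        + L₂ / 2 * (αk ^ 2 * ∫ ω, ‖gbar ω‖ ^ 2) := by
    have hA : Integrable (fun ω => Fn θk - αk * fderiv ℝ Fn θk (gbar ω)) :=
      (integrable_const (Fn θk)).sub (hint3.const_mul αk)
    have hB : Integrable (fun ω => L₂ / 2 * (αk ^ 2 * ‖gbar ω‖ ^ 2)) :=
      (hint2.const_mul (αk ^ 2)).const_mul (L₂ / 2)
    rw [integral_add hA hB,
      integral_sub (integrable_const (Fn θk)) (hint3.const_mul αk)]
    have e1 : ∫ (_ : Ω), Fn θk = Fn θk := by simp
    have e2 : ∫ ω, αk * fderiv ℝ Fn θk (gbar ω)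
        = αk * fderiv ℝ Fn θk (gradient R θk) := by
      rw [integral_const_mul, (fderiv ℝ Fn θk).integral_comp_comm hint, hmean]
    have e3 : ∫ ω, L₂ / 2 * (αk ^ 2 * ‖gbar ω‖ ^ 2)
        = L₂ / 2 * (αk ^ 2 * ∫ ω, ‖gbar ω‖ ^ 2) := by
      rw [integral_const_mul, integral_const_mul]
    rw [e1, e2, e3]
  -- final bounds
  have hinner : -(αk * fderiv ℝ Fn θk (gradient R θk))
      ≤ 2 * αk * L * ‖gradient R θk‖ ^ 2 := by
    have h1 : |fderiv ℝ Fn θk (gradient R θk)|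
        ≤ 2 * L * ‖gradient R θk‖ ^ 2 := by
      calc |fderiv ℝ Fn θk (gradient R θk)|
          ≤ ‖fderiv ℝ Fn θk‖ * ‖gradient R θk‖ := by
            rw [← Real.norm_eq_abs]
            exact ContinuousLinearMap.le_opNorm _ _
        _ ≤ 2 * L * ‖gradient R θk‖ * ‖gradient R θk‖ :=
            mul_le_mul_of_nonneg_right hfb (norm_nonneg _)
        _ = 2 * L * ‖gradient R θk‖ ^ 2 := by ring
    have h2 := neg_abs_le (fderiv ℝ Fn θk (gradient R θk))
    nlinarith [hα.le]
  have hsecond' : L₂ / 2 * (αk ^ 2 * ∫ ω, ‖gbar ω‖ ^ 2)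
      ≤ αk ^ 2 * L₂ / 2 * (m₁ / M + ((m₂ + M) / M) * ‖gradient R θk‖ ^ 2) := by
    have h1 : L₂ / 2 * αk ^ 2 ≥ 0 := by positivity
    nlinarith [hsecond]
  have hIneq := hmono.trans_eq hsplit
  show (∫ ω, Fn (θk - αk • gbar ω)) - Fn θk ≤ _
  linarith
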